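/- Let X be a finite CW complex (finitely many cells). Then the partition of X by its open cells has the NDR property: for every open cell e of X there exist an open set U ⊆ X with e ⊆ U and a continuous map H : U × [0,1] → X such that H(u, 0) = u for all u ∈ U, H(u, 1) ∈ e for all u ∈ U, and H(s, t) = s for all s ∈ e and t ∈ [0,1]. -/

import Mathlib

open Metric

/-- A CW-complex structure (in the classical sense) on a topological space `X`:
a family of cells given by characteristic maps from closed unit balls, each a
homeomorphism of the open ball onto its image, such that the open cells are
pairwise disjoint and partition `X`, and the image of the boundary sphere of every
`n`-cell is contained in the union of the open cells of dimension `< n`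
(the `(n-1)`-skeleton). -/
structure ClassicalCWComplex (X : Type*) [TopologicalSpace X] where
  /-- the index type of the `n`-cells -/
  cell : ℕ → Type
  /-- the characteristic map of each `n`-cell. -/
  map : (n : ℕ) → cell n → EuclideanSpace ℝ (Fin n) → X
  /-- characteristic maps are continuous on the closed unit ball -/
  continuousOn : ∀ n i, ContinuousOn (map n i) (closedBall 0 1)
  /-- each characteristic map restricts to a homeomorphism of the open unit ball
  onto the open cell: it has a continuous partial inverse there -/
  symm : ∀ n i, ∃ g : X → EuclideanSpace ℝ (Fin n),
    ContinuousOn g (map n i '' ball 0 1) ∧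
    ∀ x ∈ ball (0 : EuclideanSpace ℝ (Fin n)) 1, g (map n i x) = x
  /-- the open cells are pairwise disjoint -/
  pairwiseDisjoint' : ∀ (n : ℕ) (i : cell n) (m : ℕ) (j : cell m),
    (⟨n, i⟩ : Σ k, cell k) ≠ ⟨m, j⟩ →
      Disjoint (map n i '' ball 0 1) (map m j '' ball 0 1)
  /-- the open cells cover `X` -/
  union' : ⋃ (n : ℕ) (i : cell n), map n i '' ball 0 1 = Set.univ
  /-- the image of the boundary sphere of an `n`-cell lies in the union of the
  open cells of dimension `< n` -/
  mapsTo' : ∀ n i, map n i '' sphere 0 1 ⊆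
    ⋃ (m : ℕ) (_ : m < n) (j : cell m), map m j '' ball 0 1

namespace ClassicalCWComplex

variable {X : Type*} [TopologicalSpace X] (K : ClassicalCWComplex X)

/-- The open cell of dimension `n` and index `i`. -/
def openCell (n : ℕ) (i : K.cell n) : Set X := K.map n i '' ball 0 1

/-- The `m`-skeleton: the union of the open cells of dimension at most `m`. -/
def skeleton (m : ℕ) : Set X :=
  ⋃ (n : ℕ) (_ : n ≤ m) (i : K.cell n), K.openCell n i

end ClassicalCWComplex

open Set Topology

private lemma aux_quotient {E β γ δ : Type*} [TopologicalSpace E] [TopologicalSpace β]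
    [TopologicalSpace γ] [TopologicalSpace δ] [T2Space β]
    {A : Set E} (hA : IsCompact A) {φ : E → β} (hφ : ContinuousOn φ A) (U : Set β)
    {F : β → γ → δ}
    (hF : Continuous fun p : ↥(φ ⁻¹' U ∩ A) × γ => F (φ p.1.1) p.2) :
    Continuous fun p : ↥(U ∩ φ '' A) × γ => F p.1.1 p.2 := by
  haveI : CompactSpace A := isCompact_iff_compactSpace.mp hA
  set f : A → β := A.restrict φ with hf
  have hfc : Continuous f := continuousOn_iff_continuous_restrict.mp hφ
  set W : Set β := U ∩ φ '' A with hW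
  set g : ↥(f ⁻¹' W) → ↥W := W.restrictPreimage f with hg
  have hgc : Continuous g := hfc.restrictPreimage
  have hgcl : IsClosedMap g := (hfc.isProperMap.isClosedMap).restrictPreimage W
  have hgsurj : Function.Surjective g := by
    rintro ⟨w, hwU, x, hxA, rfl⟩
    exact ⟨⟨⟨x, hxA⟩, ⟨hwU, ⟨x, hxA, rfl⟩⟩⟩, rfl⟩
  have hfib : ∀ w : ↥W, IsCompact (g ⁻¹' {w}) := by
    intro w
    have h1 : IsCompact (f ⁻¹' {(w : β)}) :=
      (isClosed_singleton.preimage hfc).isCompact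
    have h2 : Subtype.val '' (g ⁻¹' {w}) = f ⁻¹' {(w : β)} := by
      ext x
      constructor
      · rintro ⟨y, hy, rfl⟩
        have : g y = w := hy
        simp only [mem_preimage, mem_singleton_iff]
        exact congrArg Subtype.val this
      · intro hx
        have hx' : f x = (w : β) := hx
        have hxW : x ∈ f ⁻¹' W := by
          simp only [mem_preimage, hx']; exact w.2
        exact ⟨⟨x, hxW⟩, Subtype.ext hx', rfl⟩
    have := IsEmbedding.subtypeVal (p := fun x : ↥A => x ∈ f ⁻¹' W)
    rw [this.isCompact_iff, h2]
    exact h1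
  have hgproper : IsProperMap g :=
    isProperMap_iff_isClosedMap_and_compact_fibers.mpr ⟨hgc, hgcl, hfib⟩
  have hq : IsQuotientMap (Prod.map g (id : γ → γ)) :=
    ((hgproper.prodMap isProperMap_id).isClosedMap).isQuotientMap
      (hgc.prodMap continuous_id) (hgsurj.prodMap Function.surjective_id)
  rw [hq.continuous_iff]
  have heq : (fun p : ↥W × γ => F (p.1 : β) p.2) ∘ Prod.map g id
      = (fun p : ↥(φ ⁻¹' U ∩ A) × γ => F (φ p.1.1) p.2) ∘
        Prod.map (fun x : ↥(f ⁻¹' W) => (⟨x.1.1, ⟨x.2.1, x.1.2⟩⟩ : ↥(φ ⁻¹' U ∩ A))) id := rfl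
  rw [heq]
  exact hF.comp <| Continuous.prodMap
    ((continuous_subtype_val.comp continuous_subtype_val).subtype_mk _) continuous_id

set_option linter.unusedSectionVars false
namespace ClassicalCWComplex


variable {X : Type*} [TopologicalSpace X] [T2Space X] (K : ClassicalCWComplex X)

/-- the closed cell -/
def cc (n : ℕ) (i : K.cell n) : Set X := K.map n i '' closedBall 0 1

lemma cellFinite (hfin : Finite (Σ n, K.cell n)) (n : ℕ) : Finite (K.cell n) :=
  Finite.of_injective (fun i => (⟨n, i⟩ : Σ k, K.cell k)) sigma_mk_injective

lemma cc_compact (n : ℕ) (i : K.cell n) : IsCompact (K.cc n i) :=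
  (isCompact_closedBall _ _).image_of_continuousOn (K.continuousOn n i)

lemma cc_closed (n : ℕ) (i : K.cell n) : IsClosed (K.cc n i) :=
  (K.cc_compact n i).isClosed

lemma openCell_subset_cc (n : ℕ) (i : K.cell n) : K.openCell n i ⊆ K.cc n i :=
  image_mono ball_subset_closedBall

lemma mem_skeleton_of {m k : ℕ} (hk : k ≤ m) {j : K.cell k} {x : X}
    (hx : x ∈ K.openCell k j) : x ∈ K.skeleton m :=
  mem_iUnion.2 ⟨k, mem_iUnion.2 ⟨hk, mem_iUnion.2 ⟨j, hx⟩⟩⟩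

lemma mem_skeleton_iff {m : ℕ} {x : X} :
    x ∈ K.skeleton m ↔ ∃ k, k ≤ m ∧ ∃ j : K.cell k, x ∈ K.openCell k j := by
  simp [skeleton, mem_iUnion]

lemma skeleton_mono {m m' : ℕ} (h : m ≤ m') : K.skeleton m ⊆ K.skeleton m' := by
  intro x hx
  obtain ⟨k, hk, j, hj⟩ := K.mem_skeleton_iff.1 hx
  exact K.mem_skeleton_of (hk.trans h) hj

lemma sphere_image_subset {n : ℕ} (i : K.cell n) {m : ℕ} (h : n ≤ m + 1) :
    K.map n i '' sphere 0 1 ⊆ K.skeleton m := by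
  intro x hx
  obtain ⟨d, hd⟩ := mem_iUnion.1 (K.mapsTo' n i hx)
  obtain ⟨hdn, hj⟩ := mem_iUnion.1 hd
  obtain ⟨j, hj⟩ := mem_iUnion.1 hj
  exact K.mem_skeleton_of (by omega) hj

lemma cc_subset_skeleton {n : ℕ} (i : K.cell n) {m : ℕ} (h : n ≤ m) :
    K.cc n i ⊆ K.skeleton m := by
  rw [cc, ← ball_union_sphere, image_union]
  exact union_subset (fun x hx => K.mem_skeleton_of h hx)
    (K.sphere_image_subset i (by omega))

lemma openCell_disjoint {n : ℕ} {i : K.cell n} {k : ℕ} {j : K.cell k}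
    (h : (⟨k, j⟩ : Σ d, K.cell d) ≠ ⟨n, i⟩) {x : X}
    (hx : x ∈ K.openCell k j) : x ∉ K.openCell n i := fun hx' =>
  (K.pairwiseDisjoint' k j n i h).le_bot ⟨hx, hx'⟩

lemma openCell_disjoint_skeleton {n : ℕ} {i : K.cell n} {m : ℕ} (h : m < n) {x : X}
    (hx : x ∈ K.openCell n i) : x ∉ K.skeleton m := by
  intro hx'
  obtain ⟨k, hk, j, hj⟩ := K.mem_skeleton_iff.1 hx'
  exact K.openCell_disjoint (by intro heq; injection heq with h1 _; omega) hj hx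

lemma skeleton_closed (hfin : Finite (Σ n, K.cell n)) (m : ℕ) : IsClosed (K.skeleton m) := by
  have : K.skeleton m = ⋃ (p : Σ k, K.cell k), ⋃ (_ : p.1 ≤ m), K.cc p.1 p.2 := by
    apply subset_antisymm
    · intro x hx
      obtain ⟨k, hk, j, hj⟩ := K.mem_skeleton_iff.1 hx
      exact mem_iUnion.2 ⟨⟨k, j⟩, mem_iUnion.2 ⟨hk, K.openCell_subset_cc k j hj⟩⟩
    · intro x hx
      obtain ⟨p, hp⟩ := mem_iUnion.1 hx
      obtain ⟨hpm, hx⟩ := mem_iUnion.1 hp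
      exact K.cc_subset_skeleton p.2 hpm hx
  rw [this]
  apply isClosed_iUnion_of_finite
  intro p
  by_cases hp : p.1 ≤ m
  · simpa [hp] using K.cc_closed p.1 p.2
  · simp [hp]


/-- Openness criterion: a subset of the `m`-skeleton is relatively open provided its preimage
under every characteristic map of dimension at most `m` is relatively open in the closed ball. -/
lemma relOpen_of_cells (hfin : Finite (Σ n, K.cell n)) (m : ℕ) (U : Set X)
    (hU : U ⊆ K.skeleton m)
    (h : ∀ k, k ≤ m → ∀ j : K.cell k, ∃ G : Set (EuclideanSpace ℝ (Fin k)),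
        IsOpen G ∧ K.map k j ⁻¹' U ∩ closedBall 0 1 = G ∩ closedBall 0 1) :
    ∃ O : Set X, IsOpen O ∧ U = O ∩ K.skeleton m := by
  set C : Set X := ⋃ (p : Σ k, K.cell k), ⋃ (_ : p.1 ≤ m),
    K.map p.1 p.2 '' (closedBall 0 1 \ (K.map p.1 p.2 ⁻¹' U)) with hC
  have hCclosed : IsClosed C := by
    apply isClosed_iUnion_of_finite
    intro p
    by_cases hp : p.1 ≤ m
    · obtain ⟨G, hG, hGeq⟩ := h p.1 hp p.2
      have hdiff : closedBall (0 : EuclideanSpace ℝ (Fin p.1)) 1 \ (K.map p.1 p.2 ⁻¹' U)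
          = closedBall 0 1 \ G := by
        ext x
        simp only [mem_diff]
        constructor
        · rintro ⟨hx1, hx2⟩
          refine ⟨hx1, fun hxG => hx2 ?_⟩
          have : x ∈ G ∩ closedBall 0 1 := ⟨hxG, hx1⟩
          rw [← hGeq] at this
          exact this.1
        · rintro ⟨hx1, hx2⟩
          refine ⟨hx1, fun hxU => hx2 ?_⟩
          have : x ∈ K.map p.1 p.2 ⁻¹' U ∩ closedBall 0 1 := ⟨hxU, hx1⟩
          rw [hGeq] at this
          exact this.1
      have hcpt : IsCompact (K.map p.1 p.2 ''
          (closedBall 0 1 \ (K.map p.1 p.2 ⁻¹' U))) := by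
        rw [hdiff]
        exact ((isCompact_closedBall _ _).diff hG).image_of_continuousOn
          ((K.continuousOn p.1 p.2).mono diff_subset)
      simpa [hp] using hcpt.isClosed
    · simp [hp]
  refine ⟨Cᶜ, hCclosed.isOpen_compl, subset_antisymm ?_ ?_⟩
  · intro x hx
    refine ⟨?_, hU hx⟩
    intro hxC
    obtain ⟨p, hp⟩ := mem_iUnion.1 hxC
    obtain ⟨hpm, y, hy, rfl⟩ := mem_iUnion.1 hp
    exact hy.2 hx
  · rintro x ⟨hxC, hxS⟩
    obtain ⟨k, hk, j, y, hy, rfl⟩ := K.mem_skeleton_iff.1 hxS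
    by_contra hxU
    exact hxC <| mem_iUnion.2 ⟨⟨k, j⟩, mem_iUnion.2
      ⟨hk, ⟨y, ⟨ball_subset_closedBall hy, hxU⟩, rfl⟩⟩⟩

/-- Continuity criterion: a homotopy on a subset of the `m`-skeleton is continuous provided
its composition with every characteristic map of dimension at most `m` is continuous. -/
lemma cont_of_cells (hfin : Finite (Σ n, K.cell n)) (m : ℕ) (U : Set X)
    (hU : U ⊆ K.skeleton m) (F : X → unitInterval → X)
    (h : ∀ k, k ≤ m → ∀ j : K.cell k,
        Continuous fun p : ↥(K.map k j ⁻¹' U ∩ closedBall 0 1) × unitInterval =>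
          F (K.map k j p.1.1) p.2) :
    Continuous fun p : ↥U × unitInterval => F p.1.1 p.2 := by
  set s : (Σ k, K.cell k) → Set (↥U × unitInterval) :=
    fun p => {q | p.1 ≤ m ∧ (q.1 : X) ∈ K.cc p.1 p.2} with hs
  apply (locallyFinite_of_finite s).continuous
  · apply subset_antisymm (subset_univ _)
    intro q _
    obtain ⟨k, hk, j, hj⟩ := K.mem_skeleton_iff.1 (hU q.1.2)
    exact mem_iUnion.2 ⟨⟨k, j⟩, hk, K.openCell_subset_cc k j hj⟩
  · intro p
    by_cases hp : p.1 ≤ m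
    · have : s p = (fun q : ↥U × unitInterval => (q.1 : X)) ⁻¹' (K.cc p.1 p.2) := by
        ext q; simp [hs, hp]
      rw [this]
      exact (K.cc_closed p.1 p.2).preimage (continuous_subtype_val.comp continuous_fst)
    · have : s p = ∅ := by ext q; simp [hs, hp]
      rw [this]; exact isClosed_empty
  · intro p
    by_cases hp : p.1 ≤ m
    · rw [continuousOn_iff_continuous_restrict]
      have key : Continuous fun q : ↥(U ∩ K.map p.1 p.2 '' closedBall 0 1) × unitInterval =>
          F q.1.1 q.2 :=
        aux_quotient (isCompact_closedBall _ _) (K.continuousOn p.1 p.2) U (h p.1 hp p.2)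
      have : domRestrict (s p) (fun q : ↥U × unitInterval => F q.1.1 q.2)
          = (fun q : ↥(U ∩ K.map p.1 p.2 '' closedBall 0 1) × unitInterval => F q.1.1 q.2) ∘
            (fun r : ↥(s p) => ((⟨r.1.1.1, r.1.1.2, r.2.2⟩ :
              ↥(U ∩ K.map p.1 p.2 '' closedBall 0 1)), r.1.2)) := rfl
      rw [this]
      exact key.comp <| Continuous.prodMk
        (((continuous_subtype_val.comp (continuous_fst.comp continuous_subtype_val))).subtype_mk _)
        (continuous_snd.comp continuous_subtype_val)
    · intro q hq
      exact absurd hq.1 hp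


/-- reparametrization `t ↦ max (2t-1) 0` of the unit interval -/
noncomputable def sig (t : unitInterval) : unitInterval :=
  Set.projIcc 0 1 zero_le_one (2 * (t : ℝ) - 1)

lemma sig_cont : Continuous sig :=
  continuous_projIcc.comp (by continuity)

lemma sig_of_le {t : unitInterval} (h : (t : ℝ) ≤ 1/2) : sig t = 0 := by
  unfold sig
  rw [Set.projIcc_of_le_left _ (by linarith)]
  rfl

lemma sig_one : sig 1 = 1 := by
  unfold sig
  rw [Set.projIcc_of_right_le _ (by norm_num)]
  rfl

lemma rho_mem_closedBall {n : ℕ} {y : EuclideanSpace ℝ (Fin n)} (hy : y ≠ 0) (hy1 : ‖y‖ ≤ 1)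
    {s : ℝ} (hs0 : 0 ≤ s) (hs1 : s ≤ 1) :
    ((1 - s) + s * ‖y‖⁻¹) • y ∈ closedBall (0 : EuclideanSpace ℝ (Fin n)) 1 := by
  have hpos : 0 < ‖y‖ := norm_pos_iff.mpr hy
  have h2 : (0:ℝ) ≤ s * ‖y‖⁻¹ := by positivity
  rw [mem_closedBall, dist_zero_right, norm_smul, Real.norm_eq_abs,
    abs_of_nonneg (by linarith)]
  have key : ((1 - s) + s * ‖y‖⁻¹) * ‖y‖ = (1 - s) * ‖y‖ + s := by
    field_simp
  rw [key]
  nlinarith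

lemma smul_inv_norm_mem_sphere {n : ℕ} {y : EuclideanSpace ℝ (Fin n)} (hy : y ≠ 0) :
    ‖y‖⁻¹ • y ∈ sphere (0 : EuclideanSpace ℝ (Fin n)) 1 := by
  rw [mem_sphere, dist_zero_right]
  exact norm_smul_inv_norm (𝕜 := ℝ) hy

lemma mem_ball_or_sphere {n : ℕ} {y : EuclideanSpace ℝ (Fin n)}
    (hy : y ∈ closedBall (0 : EuclideanSpace ℝ (Fin n)) 1) :
    y ∈ ball (0 : EuclideanSpace ℝ (Fin n)) 1 ∨ ‖y‖ = 1 := by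
  rw [mem_closedBall, dist_zero_right] at hy
  rcases lt_or_eq_of_le hy with h | h
  · exact Or.inl (by rwa [mem_ball, dist_zero_right])
  · exact Or.inr h

lemma coeI_zero : ((0 : unitInterval) : ℝ) = 0 := rfl
lemma coeI_one : ((1 : unitInterval) : ℝ) = 1 := rfl

lemma main_step (hfin : Finite (Σ n, K.cell n)) {n : ℕ} {i : K.cell n} (M : ℕ)
    (U O : Set X) (hO : IsOpen O) (hUO : U = O ∩ K.skeleton M)
    (hUe : K.openCell n i ⊆ U)
    (F : X → unitInterval → X)
    (hFc : Continuous fun p : ↥U × unitInterval => F p.1.1 p.2)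
    (hF0 : ∀ x ∈ U, F x 0 = x) (hF1 : ∀ x ∈ U, F x 1 ∈ K.openCell n i)
    (hFe : ∀ x ∈ K.openCell n i, ∀ t, F x t = x) :
    ∃ U' : Set X, K.openCell n i ⊆ U' ∧
      (∃ O' : Set X, IsOpen O' ∧ U' = O' ∩ K.skeleton (M + 1)) ∧
      ∃ F' : X → unitInterval → X,
        (Continuous fun p : ↥U' × unitInterval => F' p.1.1 p.2) ∧
        (∀ x ∈ U', F' x 0 = x) ∧ (∀ x ∈ U', F' x 1 ∈ K.openCell n i) ∧
        (∀ x ∈ K.openCell n i, ∀ t, F' x t = x) := by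
  classical
  have hUsk : U ⊆ K.skeleton M := by rw [hUO]; exact inter_subset_right
  -- the sets `W j`
  set W : K.cell (M + 1) → Set (EuclideanSpace ℝ (Fin (M + 1))) :=
    fun j => {x | 1/2 < ‖x‖ ∧ K.map (M + 1) j (‖x‖⁻¹ • x) ∈ O} with hW
  have hWne : ∀ j, ∀ x ∈ W j, x ≠ 0 := by
    intro j x hx h0
    rw [h0] at hx
    simp only [hW, mem_setOf_eq, norm_zero] at hx
    linarith [hx.1]
  have hWopen : ∀ j, IsOpen (W j) := by
    intro j
    have h1 : IsOpen {x : EuclideanSpace ℝ (Fin (M + 1)) | 1/2 < ‖x‖} :=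
      isOpen_lt continuous_const continuous_norm
    have h2 : ContinuousOn (fun x : EuclideanSpace ℝ (Fin (M + 1)) =>
        K.map (M + 1) j (‖x‖⁻¹ • x)) {x | 1/2 < ‖x‖} := by
      apply (K.continuousOn (M + 1) j).comp
      · exact ((continuous_norm.continuousOn.inv₀
          (fun x hx => by simp only [mem_setOf_eq] at hx; positivity)).smul continuousOn_id)
      · intro x hx
        simp only [mem_setOf_eq] at hx
        have hxne : x ≠ 0 := fun h0 => by rw [h0, norm_zero] at hx; linarith
        exact sphere_subset_closedBall (smul_inv_norm_mem_sphere hxne)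
    have h3 := h2.isOpen_inter_preimage h1 hO
    have he : W j = {x : EuclideanSpace ℝ (Fin (M + 1)) | 1/2 < ‖x‖} ∩
        (fun x => K.map (M + 1) j (‖x‖⁻¹ • x)) ⁻¹' O := by
      ext x; simp [hW]
    rw [he]
    exact h3
  -- membership fact: the radial projection of a point of `W j` lies in `U`
  have fact1 : ∀ j, ∀ x ∈ W j, K.map (M + 1) j (‖x‖⁻¹ • x) ∈ U := by
    intro j x hx
    have hxne : x ≠ 0 := hWne j x hx
    have hs : K.map (M + 1) j (‖x‖⁻¹ • x) ∈ K.skeleton M :=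
      K.sphere_image_subset j le_rfl (mem_image_of_mem _ (smul_inv_norm_mem_sphere hxne))
    rw [hUO]
    exact ⟨hx.2, hs⟩
  -- the new neighbourhood
  set U' : Set X := U ∪ ⋃ j, K.map (M + 1) j '' (W j ∩ ball 0 1) with hU'
  have hpart : ∀ j, K.map (M + 1) j '' (W j ∩ ball 0 1) ⊆ K.openCell (M + 1) j :=
    fun j => image_mono inter_subset_right
  have hU'sub : U' ⊆ K.skeleton (M + 1) := by
    rw [hU']
    apply union_subset (hUsk.trans (K.skeleton_mono (Nat.le_succ M)))
    exact iUnion_subset fun j => (hpart j).trans (fun x hx => K.mem_skeleton_of le_rfl hx)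
  have hUe' : K.openCell n i ⊆ U' := hUe.trans subset_union_left
  have hnotpart : ∀ x ∈ U, ¬ ∃ j, x ∈ K.map (M + 1) j '' (W j ∩ ball 0 1) := by
    rintro x hx ⟨j, hj⟩
    exact K.openCell_disjoint_skeleton (Nat.lt_succ_self M) (hpart j hj) (hUsk hx)
  have hU'cases : ∀ x ∈ U', x ∈ U ∨ ∃ j, x ∈ K.map (M + 1) j '' (W j ∩ ball 0 1) := by
    intro x hx
    rcases hx with hx | hx
    · exact Or.inl hx
    · exact Or.inr (mem_iUnion.1 hx)
  -- injectivity of characteristic maps on the open ball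
  have hinj : ∀ (k : ℕ) (j : K.cell k), ∀ x ∈ ball (0 : EuclideanSpace ℝ (Fin k)) 1,
      ∀ y ∈ ball (0 : EuclideanSpace ℝ (Fin k)) 1, K.map k j x = K.map k j y → x = y := by
    intro k j x hx y hy h
    have hs := (K.symm k j).choose_spec.2
    rw [← hs x hx, ← hs y hy, h]
  -- the key set identity for the `(M+1)`-cells
  have hPW : ∀ j : K.cell (M + 1),
      K.map (M + 1) j ⁻¹' U' ∩ closedBall 0 1 = W j ∩ closedBall 0 1 := by
    intro j
    ext x
    simp only [mem_inter_iff, mem_preimage]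
    constructor
    · rintro ⟨hxU', hxB⟩
      refine ⟨?_, hxB⟩
      rcases mem_ball_or_sphere hxB with hball | hsph
      · have hoc : K.map (M + 1) j x ∈ K.openCell (M + 1) j := mem_image_of_mem _ hball
        have hnotU : K.map (M + 1) j x ∉ U := fun hU =>
          K.openCell_disjoint_skeleton (Nat.lt_succ_self M) hoc (hUsk hU)
        rcases hU'cases _ hxU' with h | ⟨j', w, hw, hweq⟩
        · exact absurd h hnotU
        · have hj' : (⟨M + 1, j'⟩ : Σ k, K.cell k) = ⟨M + 1, j⟩ := by
            by_contra hne
            exact K.openCell_disjoint hne (hpart j' ⟨w, hw, hweq⟩) hoc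
          have hj'' : j' = j := sigma_mk_injective hj'
          subst hj''
          have hxw : w = x := hinj _ j' w hw.2 x hball hweq
          rw [← hxw]
          exact hw.1
      · have hxU : K.map (M + 1) j x ∈ U := by
          rcases hU'cases _ hxU' with h | ⟨j', hj'⟩
          · exact h
          · exfalso
            have hsk : K.map (M + 1) j x ∈ K.skeleton M :=
              K.sphere_image_subset j le_rfl
                (mem_image_of_mem _ (by rw [mem_sphere, dist_zero_right]; exact hsph))
            exact K.openCell_disjoint_skeleton (Nat.lt_succ_self M) (hpart j' hj') hsk
        refine ⟨by rw [hsph]; norm_num, ?_⟩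
        rw [hsph, inv_one, one_smul]
        rw [hUO] at hxU
        exact hxU.1
    · rintro ⟨hxW, hxB⟩
      refine ⟨?_, hxB⟩
      rcases mem_ball_or_sphere hxB with hball | hsph
      · exact Or.inr (mem_iUnion.2 ⟨j, mem_image_of_mem _ ⟨hxW, hball⟩⟩)
      · left
        have := fact1 j x hxW
        rwa [hsph, inv_one, one_smul] at this
  -- the new homotopy
  set F' : X → unitInterval → X := fun x t =>
    if hx : ∃ j, x ∈ K.map (M + 1) j '' (W j ∩ ball 0 1) then
      if (t : ℝ) ≤ 1/2 then
        K.map (M + 1) hx.choose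
          ((1 - min (2 * (t : ℝ)) 1 + min (2 * (t : ℝ)) 1 *
            ‖(K.symm (M + 1) hx.choose).choose x‖⁻¹) • (K.symm (M + 1) hx.choose).choose x)
      else
        F (K.map (M + 1) hx.choose
          (‖(K.symm (M + 1) hx.choose).choose x‖⁻¹ • (K.symm (M + 1) hx.choose).choose x)) (sig t)
    else F x (sig t) with hF'
  have evalU : ∀ x ∈ U, ∀ t, F' x t = F x (sig t) := by
    intro x hx t
    rw [hF']
    simp only [dif_neg (hnotpart x hx)]
  have evalCell : ∀ (j : K.cell (M + 1)), ∀ w ∈ W j ∩ ball 0 1, ∀ t,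
      F' (K.map (M + 1) j w) t =
        if (t : ℝ) ≤ 1/2 then
          K.map (M + 1) j ((1 - min (2 * (t : ℝ)) 1 + min (2 * (t : ℝ)) 1 * ‖w‖⁻¹) • w)
        else F (K.map (M + 1) j (‖w‖⁻¹ • w)) (sig t) := by
    intro j w hw t
    have hx : ∃ j', K.map (M + 1) j w ∈ K.map (M + 1) j' '' (W j' ∩ ball 0 1) :=
      ⟨j, mem_image_of_mem _ hw⟩
    rw [hF']
    simp only [dif_pos hx]
    have hjeq : hx.choose = j := by
      have hoc : K.map (M + 1) j w ∈ K.openCell (M + 1) j := mem_image_of_mem _ hw.2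
      have hj' : (⟨M + 1, hx.choose⟩ : Σ k, K.cell k) = ⟨M + 1, j⟩ := by
        by_contra hne
        exact K.openCell_disjoint hne (hpart _ hx.choose_spec) hoc
      exact sigma_mk_injective hj'
    have hyw : (K.symm (M + 1) j).choose (K.map (M + 1) j w) = w :=
      (K.symm (M + 1) j).choose_spec.2 w hw.2
    rw [hjeq, hyw]
  refine ⟨U', hUe', ?_, F', ?_, ?_, ?_, ?_⟩
  -- openness
  · apply K.relOpen_of_cells hfin (M + 1) U' hU'sub
    intro k hk j
    by_cases hkM : k ≤ M
    · obtain ⟨G, hG, hGeq⟩ := (continuousOn_iff'.1 (K.continuousOn k j)) O hO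
      refine ⟨G, hG, ?_⟩
      rw [← hGeq]
      ext x
      simp only [mem_inter_iff, mem_preimage]
      constructor
      · rintro ⟨hxU', hxB⟩
        refine ⟨?_, hxB⟩
        have hsk : K.map k j x ∈ K.skeleton M :=
          K.cc_subset_skeleton j hkM (mem_image_of_mem _ hxB)
        rcases hU'cases _ hxU' with h | ⟨j', hj'⟩
        · rw [hUO] at h; exact h.1
        · exact absurd hsk (K.openCell_disjoint_skeleton (Nat.lt_succ_self M) (hpart j' hj'))
      · rintro ⟨hxO, hxB⟩
        have hsk : K.map k j x ∈ K.skeleton M :=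
          K.cc_subset_skeleton j hkM (mem_image_of_mem _ hxB)
        exact ⟨Or.inl (by rw [hUO]; exact ⟨hxO, hsk⟩), hxB⟩
    · have hkeq : k = M + 1 := by omega
      subst hkeq
      exact ⟨W j, hWopen j, hPW j⟩
  -- continuity
  · apply K.cont_of_cells hfin (M + 1) U' hU'sub
    intro k hk j
    by_cases hkM : k ≤ M
    · have hmem : ∀ p : ↥(K.map k j ⁻¹' U' ∩ closedBall 0 1) × unitInterval,
          K.map k j p.1.1 ∈ U := by
        intro p
        have hsk : K.map k j p.1.1 ∈ K.skeleton M :=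
          K.cc_subset_skeleton j hkM (mem_image_of_mem _ p.1.2.2)
        rcases hU'cases _ p.1.2.1 with h | ⟨j', hj'⟩
        · exact h
        · exact absurd hsk (K.openCell_disjoint_skeleton (Nat.lt_succ_self M) (hpart j' hj'))
      have hin : Continuous fun p : ↥(K.map k j ⁻¹' U' ∩ closedBall 0 1) × unitInterval =>
          ((⟨K.map k j p.1.1, hmem p⟩ : ↥U), sig p.2) := by
        refine Continuous.prodMk (Continuous.subtype_mk ?_ _) (sig_cont.comp continuous_snd)
        exact (K.continuousOn k j).comp_continuous
          (continuous_subtype_val.comp continuous_fst) (fun p => p.1.2.2)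
      exact (hFc.comp hin).congr fun p => (evalU _ (hmem p) p.2).symm
    · have hkeq : k = M + 1 := by omega
      subst hkeq
      rw [hPW j]
      set S := W j ∩ closedBall (0 : EuclideanSpace ℝ (Fin (M + 1))) 1 with hS
      have hyc : Continuous fun p : ↥S × unitInterval =>
          (p.1.1 : EuclideanSpace ℝ (Fin (M + 1))) :=
        continuous_subtype_val.comp continuous_fst
      have hyne : ∀ p : ↥S × unitInterval,
          (p.1.1 : EuclideanSpace ℝ (Fin (M + 1))) ≠ 0 :=
        fun p h0 => hWne j _ p.1.2.1 h0
      have hynorm : ∀ p : ↥S × unitInterval,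
          ‖(p.1.1 : EuclideanSpace ℝ (Fin (M + 1)))‖ ≠ 0 :=
        fun p => norm_ne_zero_iff.mpr (hyne p)
      have hyle : ∀ p : ↥S × unitInterval,
          ‖(p.1.1 : EuclideanSpace ℝ (Fin (M + 1)))‖ ≤ 1 := by
        intro p
        have h := p.1.2.2
        rwa [mem_closedBall, dist_zero_right] at h
      have hinvc : Continuous fun p : ↥S × unitInterval =>
          ‖(p.1.1 : EuclideanSpace ℝ (Fin (M + 1)))‖⁻¹ := hyc.norm.inv₀ hynorm
      have hminc : Continuous fun p : ↥S × unitInterval => min (2 * (p.2 : ℝ)) 1 :=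
        (continuous_const.mul (continuous_subtype_val.comp continuous_snd)).min continuous_const
      have htc : Continuous fun p : ↥S × unitInterval => (p.2 : ℝ) :=
        continuous_subtype_val.comp continuous_snd
      have hf1 : Continuous fun p : ↥S × unitInterval =>
          K.map (M + 1) j ((1 - min (2 * (p.2 : ℝ)) 1 + min (2 * (p.2 : ℝ)) 1 *
            ‖(p.1.1 : EuclideanSpace ℝ (Fin (M + 1)))‖⁻¹) •
            (p.1.1 : EuclideanSpace ℝ (Fin (M + 1)))) := by
        apply (K.continuousOn (M + 1) j).comp_continuous
        · exact (((continuous_const.sub hminc).add (hminc.mul hinvc)).smul hyc)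
        · intro p
          refine rho_mem_closedBall (hyne p) (hyle p) ?_ (min_le_right _ _)
          have := p.2.2.1
          positivity
      have hsmem : ∀ p : ↥S × unitInterval,
          K.map (M + 1) j (‖(p.1.1 : EuclideanSpace ℝ (Fin (M + 1)))‖⁻¹ •
            (p.1.1 : EuclideanSpace ℝ (Fin (M + 1)))) ∈ U :=
        fun p => fact1 j _ p.1.2.1
      have hf2 : Continuous fun p : ↥S × unitInterval =>
          F (K.map (M + 1) j (‖(p.1.1 : EuclideanSpace ℝ (Fin (M + 1)))‖⁻¹ •
            (p.1.1 : EuclideanSpace ℝ (Fin (M + 1))))) (sig p.2) := by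
        have hin : Continuous fun p : ↥S × unitInterval =>
            ((⟨K.map (M + 1) j (‖(p.1.1 : EuclideanSpace ℝ (Fin (M + 1)))‖⁻¹ •
              (p.1.1 : EuclideanSpace ℝ (Fin (M + 1)))), hsmem p⟩ : ↥U), sig p.2) := by
          refine Continuous.prodMk (Continuous.subtype_mk ?_ _) (sig_cont.comp continuous_snd)
          apply (K.continuousOn (M + 1) j).comp_continuous (hinvc.smul hyc)
          intro p
          exact sphere_subset_closedBall (smul_inv_norm_mem_sphere (hyne p))
        exact hFc.comp hin
      have hnice : Continuous fun p : ↥S × unitInterval =>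
          if (p.2 : ℝ) ≤ 1/2 then
            K.map (M + 1) j ((1 - min (2 * (p.2 : ℝ)) 1 + min (2 * (p.2 : ℝ)) 1 *
              ‖(p.1.1 : EuclideanSpace ℝ (Fin (M + 1)))‖⁻¹) •
              (p.1.1 : EuclideanSpace ℝ (Fin (M + 1))))
          else F (K.map (M + 1) j (‖(p.1.1 : EuclideanSpace ℝ (Fin (M + 1)))‖⁻¹ •
            (p.1.1 : EuclideanSpace ℝ (Fin (M + 1))))) (sig p.2) := by
        apply Continuous.if_le hf1 hf2 htc continuous_const
        intro p hp
        have hmin : min (2 * (p.2 : ℝ)) 1 = 1 := by rw [hp]; norm_num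
        have hco : (1 : ℝ) - min (2 * (p.2 : ℝ)) 1 + min (2 * (p.2 : ℝ)) 1 *
            ‖(p.1.1 : EuclideanSpace ℝ (Fin (M + 1)))‖⁻¹ =
            ‖(p.1.1 : EuclideanSpace ℝ (Fin (M + 1)))‖⁻¹ := by rw [hmin]; ring
        rw [hco, sig_of_le (le_of_eq hp), hF0 _ (hsmem p)]
      apply hnice.congr
      rintro ⟨⟨y, hy⟩, t⟩
      rcases mem_ball_or_sphere hy.2 with hball | hsph
      · exact (evalCell j y ⟨hy.1, hball⟩ t).symm
      · have hyU : K.map (M + 1) j y ∈ U := by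
          have h := fact1 j y hy.1
          rwa [hsph, inv_one, one_smul] at h
        rw [evalU _ hyU t]
        by_cases ht : (t : ℝ) ≤ 1/2
        · rw [if_pos ht]
          have hco : (1 : ℝ) - min (2 * (t : ℝ)) 1 + min (2 * (t : ℝ)) 1 * ‖y‖⁻¹ = 1 := by
            rw [hsph, inv_one]; ring
          rw [hco, one_smul, sig_of_le ht, hF0 _ hyU]
        · rw [if_neg ht, hsph, inv_one, one_smul]
  -- time zero
  · intro x hx
    rcases hU'cases x hx with h | ⟨j, w, hw, rfl⟩
    · rw [evalU x h 0, sig_of_le (by rw [coeI_zero]; norm_num)]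
      exact hF0 x h
    · rw [evalCell j w hw 0, if_pos (by rw [coeI_zero]; norm_num)]
      have hco : (1 : ℝ) - min (2 * ((0 : unitInterval) : ℝ)) 1 +
          min (2 * ((0 : unitInterval) : ℝ)) 1 * ‖w‖⁻¹ = 1 := by
        rw [coeI_zero]; norm_num
      rw [hco, one_smul]
  -- time one
  · intro x hx
    rcases hU'cases x hx with h | ⟨j, w, hw, rfl⟩
    · rw [evalU x h 1, sig_one]
      exact hF1 x h
    · rw [evalCell j w hw 1, if_neg (by rw [coeI_one]; norm_num), sig_one]
      exact hF1 _ (fact1 j w hw.1)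
  -- fixing the cell
  · intro x hx t
    rw [evalU x (hUe hx) t, hFe x hx]


lemma main_ind (hfin : Finite (Σ n, K.cell n)) (n : ℕ) (i : K.cell n) (d : ℕ) :
    ∃ U : Set X, K.openCell n i ⊆ U ∧
      (∃ O : Set X, IsOpen O ∧ U = O ∩ K.skeleton (n + d)) ∧
      ∃ F : X → unitInterval → X,
        (Continuous fun p : ↥U × unitInterval => F p.1.1 p.2) ∧
        (∀ x ∈ U, F x 0 = x) ∧
        (∀ x ∈ U, F x 1 ∈ K.openCell n i) ∧
        (∀ x ∈ K.openCell n i, ∀ t, F x t = x) := by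
  induction d with
  | zero =>
    refine ⟨K.openCell n i, subset_rfl, ?_, fun x _ => x,
      continuous_subtype_val.comp continuous_fst, fun x _ => rfl, fun x hx => hx,
      fun x _ _ => rfl⟩
    apply K.relOpen_of_cells hfin n (K.openCell n i) (fun x hx => K.mem_skeleton_of le_rfl hx)
    intro k hk j
    by_cases hp : (⟨k, j⟩ : Σ d, K.cell d) = ⟨n, i⟩
    · obtain ⟨hkn, hji⟩ := Sigma.mk.inj_iff.mp hp
      subst hkn
      have hj : j = i := eq_of_heq hji
      subst hj
      refine ⟨ball 0 1, isOpen_ball, ?_⟩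
      ext x
      simp only [mem_inter_iff, mem_preimage]
      constructor
      · rintro ⟨hxU, hxB⟩
        refine ⟨?_, hxB⟩
        rcases mem_ball_or_sphere hxB with hball | hsph
        · exact hball
        · exfalso
          have hsk := K.mapsTo' k j
            (mem_image_of_mem _ (by rw [mem_sphere, dist_zero_right]; exact hsph))
          obtain ⟨dd, hdd⟩ := mem_iUnion.1 hsk
          obtain ⟨hddlt, hj2⟩ := mem_iUnion.1 hdd
          obtain ⟨j', hj'⟩ := mem_iUnion.1 hj2
          exact K.openCell_disjoint (by intro he; injection he with h1 _; omega) hj' hxU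
      · rintro ⟨hball, _⟩
        exact ⟨mem_image_of_mem _ hball, ball_subset_closedBall hball⟩
    · refine ⟨∅, isOpen_empty, ?_⟩
      ext x
      simp only [mem_inter_iff, mem_preimage, mem_empty_iff_false, false_and, iff_false, not_and]
      intro hxU hxB
      rcases mem_ball_or_sphere hxB with hball | hsph
      · exact K.openCell_disjoint hp (mem_image_of_mem _ hball) hxU
      · have hsk := K.mapsTo' k j
          (mem_image_of_mem _ (by rw [mem_sphere, dist_zero_right]; exact hsph))
        obtain ⟨dd, hdd⟩ := mem_iUnion.1 hsk
        obtain ⟨hddlt, hj2⟩ := mem_iUnion.1 hdd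
        obtain ⟨j', hj'⟩ := mem_iUnion.1 hj2
        exact K.openCell_disjoint (by intro he; injection he with h1 _; omega) hj' hxU
  | succ m ih =>
    obtain ⟨U, hUe, ⟨O, hO, hUO⟩, F, hFc, hF0, hF1, hFe⟩ := ih
    exact K.main_step hfin (n + m) U O hO hUO hUe F hFc hF0 hF1 hFe

end ClassicalCWComplex


/-- In a finite CW complex, the partition by open cells has the NDR
property: every open cell is a neighborhood deformation retract. -/
theorem stmt5 {X : Type*} [TopologicalSpace X] [T2Space X]
    (K : ClassicalCWComplex X) (hfin : Finite (Σ n, K.cell n)) :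
    ∀ (n : ℕ) (i : K.cell n),
      ∃ U : Set X, IsOpen U ∧ K.openCell n i ⊆ U ∧
        ∃ H : U × unitInterval → X, Continuous H ∧
          (∀ u : U, H (u, 0) = u) ∧
          (∀ u : U, H (u, 1) ∈ K.openCell n i) ∧
          (∀ u : U, (u : X) ∈ K.openCell n i → ∀ t : unitInterval, H (u, t) = u) := by
  intro n i
  have hbdd : ∃ N, n ≤ N ∧ ∀ (k : ℕ), K.cell k → k ≤ N := by
    have hfr : (Set.range (fun p : Σ k, K.cell k => p.1)).Finite := Set.finite_range _
    obtain ⟨N0, hN0⟩ := hfr.bddAbove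
    exact ⟨max n N0, le_max_left _ _,
      fun k j => le_trans (hN0 ⟨⟨k, j⟩, rfl⟩) (le_max_right _ _)⟩
  obtain ⟨N, hnN, hN⟩ := hbdd
  have hsk : K.skeleton N = Set.univ := by
    apply Set.eq_univ_of_univ_subset
    rw [← K.union']
    intro x hx
    obtain ⟨k, hk⟩ := Set.mem_iUnion.1 hx
    obtain ⟨j, hj⟩ := Set.mem_iUnion.1 hk
    exact K.mem_skeleton_of (hN k j) hj
  obtain ⟨U, hUe, ⟨O, hO, hUO⟩, F, hFc, hF0, hF1, hFe⟩ := K.main_ind hfin n i (N - n)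
  have hNn : n + (N - n) = N := by omega
  rw [hNn, hsk, Set.inter_univ] at hUO
  exact ⟨U, (by rw [hUO]; exact hO), hUe, fun p => F p.1.1 p.2, hFc, fun u => hF0 u u.2,
    fun u => hF1 u u.2, fun u hu t => hFe u hu t⟩
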